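/- Let Y, Ŷ, A, D be random variables with Y, Ŷ taking values in {1,...,K}, A, D in {0,1}, and suppose P(Ŷ = Y | D = 1) = 1. Let p_D = P(D=1), p⁺ = P(A=1) ∈ (0,1), q⁺ = P(A=1 | D=1), q_ŷ = P(Y=ŷ | D=1), q_ŷ⁺ = P(Y=ŷ, A=1 | D=1), φ_ŷ⁺ = P(Ŷ=ŷ | D=0, A=1), φ_ŷ⁻ = P(Ŷ=ŷ | D=0, A=0). Then for every ŷ, the statistical parity gap Δs.p.(ŷ) := P(Ŷ=ŷ | A=1) − P(Ŷ=ŷ | A=0) equals (p_D / (p⁺(1−p⁺)))·(φ_ŷ⁺(p⁺ − q⁺) − (q_ŷ p⁺ − q_ŷ⁺)) + (φ_ŷ⁺ − φ_ŷ⁻)·(1 − p_D(1−q⁺)/(1−p⁺)), assuming all conditioning events have positive probability. -/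
import Mathlib


open scoped BigOperators Classical

noncomputable def pr {Ω : Type*} [Fintype Ω] (P : Ω → ℝ) (E : Set Ω) : ℝ :=
  ∑ ω, if ω ∈ E then P ω else 0

noncomputable def cpr {Ω : Type*} [Fintype Ω] (P : Ω → ℝ) (E F : Set Ω) : ℝ :=
  pr P (E ∩ F) / pr P F

section Aux
variable {Ω : Type*} [Fintype Ω]

lemma pr_congr (P : Ω → ℝ) {E F : Set Ω} (h : ∀ ω, P ω ≠ 0 → (ω ∈ E ↔ ω ∈ F)) :
    pr P E = pr P F := by
  unfold pr
  apply Finset.sum_congr rfl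
  intro ω _
  by_cases hp : P ω = 0
  · by_cases h1 : ω ∈ E <;> by_cases h2 : ω ∈ F <;> simp [h1, h2, hp]
  · rw [if_congr (h ω hp) rfl rfl]

lemma pr_compl_split (P : Ω → ℝ) (G F : Set Ω) :
    pr P F = pr P (G ∩ F) + pr P (Gᶜ ∩ F) := by
  unfold pr
  rw [← Finset.sum_add_distrib]
  apply Finset.sum_congr rfl
  intro ω _
  by_cases h : ω ∈ G <;> by_cases h2 : ω ∈ F <;> simp [h, h2]

lemma pr_split (P : Ω → ℝ) (E : Set Ω) (D : Ω → Bool) :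
    pr P E = pr P (E ∩ {ω | D ω = true}) + pr P (E ∩ {ω | D ω = false}) := by
  unfold pr
  rw [← Finset.sum_add_distrib]
  apply Finset.sum_congr rfl
  intro ω _
  by_cases h : D ω = true <;> by_cases h2 : ω ∈ E <;>
    simp_all [Set.mem_inter_iff]

lemma pr_eq_zero_forall (P : Ω → ℝ) (hP0 : ∀ ω, 0 ≤ P ω) {E : Set Ω}
    (h : pr P E = 0) : ∀ ω ∈ E, P ω = 0 := by
  intro ω hω
  have hnn : ∀ i ∈ Finset.univ, (0:ℝ) ≤ if i ∈ E then P i else 0 := by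
    intro i _
    by_cases hi : i ∈ E <;> simp [hi, hP0 i]
  have := (Finset.sum_eq_zero_iff_of_nonneg hnn).mp h ω (Finset.mem_univ ω)
  simpa [hω] using this

end Aux

/-- statistical parity gap of the memorizing classifier. -/
theorem stmt_0 {Ω : Type*} [Fintype Ω] (P : Ω → ℝ)
    (hP0 : ∀ ω, 0 ≤ P ω) (hP1 : ∑ ω, P ω = 1)
    {K : ℕ} (Y Yh : Ω → Fin K) (A D : Ω → Bool)
    (hA1 : 0 < pr P {ω | A ω = true}) (hA0 : 0 < pr P {ω | A ω = false})
    (hD1 : 0 < pr P {ω | D ω = true})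
    (hD0A1 : 0 < pr P ({ω | D ω = false} ∩ {ω | A ω = true}))
    (hD0A0 : 0 < pr P ({ω | D ω = false} ∩ {ω | A ω = false}))
    (hmem : cpr P {ω | Yh ω = Y ω} {ω | D ω = true} = 1)
    (yh : Fin K)
    (pD pp qp qy qyp phip phim : ℝ)
    (hpD : pD = pr P {ω | D ω = true})
    (hpp : pp = pr P {ω | A ω = true})
    (hpp0 : 0 < pp) (hpp1 : pp < 1)
    (hqp : qp = cpr P {ω | A ω = true} {ω | D ω = true})
    (hqy : qy = cpr P {ω | Y ω = yh} {ω | D ω = true})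
    (hqyp : qyp = cpr P ({ω | Y ω = yh} ∩ {ω | A ω = true}) {ω | D ω = true})
    (hphip : phip = cpr P {ω | Yh ω = yh} ({ω | D ω = false} ∩ {ω | A ω = true}))
    (hphim : phim = cpr P {ω | Yh ω = yh} ({ω | D ω = false} ∩ {ω | A ω = false})) :
    cpr P {ω | Yh ω = yh} {ω | A ω = true} - cpr P {ω | Yh ω = yh} {ω | A ω = false}
      = pD / (pp * (1 - pp)) * (phip * (pp - qp) - (qy * pp - qyp))
        + (phip - phim) * (1 - pD * (1 - qp) / (1 - pp)) := by
  have hD1' : pr P {ω | D ω = true} ≠ 0 := ne_of_gt hD1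
  -- almost-sure equality on D = true
  have hd : pr P ({ω | Yh ω = Y ω} ∩ {ω | D ω = true}) = pr P {ω | D ω = true} := by
    unfold cpr at hmem
    field_simp at hmem
    exact hmem
  have hz : pr P ({ω | Yh ω = Y ω}ᶜ ∩ {ω | D ω = true}) = 0 := by
    have := pr_compl_split P {ω | Yh ω = Y ω} {ω | D ω = true}
    linarith
  have has : ∀ ω, P ω ≠ 0 → D ω = true → Yh ω = Y ω := by
    intro ω hp hdω
    by_contra hne
    exact hp (pr_eq_zero_forall P hP0 hz ω ⟨hne, hdω⟩)
  -- total mass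
  have huniv : pr P (Set.univ : Set Ω) = 1 := by
    unfold pr; simpa using hP1
  have hsum : pr P {ω | A ω = true} + pr P {ω | A ω = false} = 1 := by
    have := pr_split P (Set.univ : Set Ω) A
    simpa [Set.univ_inter, huniv] using this.symm
  have ha0 : pr P {ω | A ω = false} = 1 - pp := by
    rw [hpp]; linarith
  -- conditional probabilities as products
  have hqp' : pr P ({ω | A ω = true} ∩ {ω | D ω = true}) = qp * pD := by
    rw [hqp, hpD]; unfold cpr; field_simp
  have hqy' : pr P ({ω | Y ω = yh} ∩ {ω | D ω = true}) = qy * pD := by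
    rw [hqy, hpD]; unfold cpr; field_simp
  have hqyp' : pr P ({ω | Y ω = yh} ∩ {ω | A ω = true} ∩ {ω | D ω = true}) = qyp * pD := by
    rw [hqyp, hpD]; unfold cpr; field_simp
  have hphip' : pr P ({ω | Yh ω = yh} ∩ ({ω | D ω = false} ∩ {ω | A ω = true}))
      = phip * pr P ({ω | D ω = false} ∩ {ω | A ω = true}) := by
    rw [hphip]; unfold cpr; field_simp
  have hphim' : pr P ({ω | Yh ω = yh} ∩ ({ω | D ω = false} ∩ {ω | A ω = false}))
      = phim * pr P ({ω | D ω = false} ∩ {ω | A ω = false}) := by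
    rw [hphim]; unfold cpr; field_simp
  -- masses of D=false slices
  have he1 : pr P ({ω | D ω = false} ∩ {ω | A ω = true}) = pp - qp * pD := by
    have hsplit := pr_split P {ω | A ω = true} D
    have hc : pr P ({ω | A ω = true} ∩ {ω | D ω = false})
        = pr P ({ω | D ω = false} ∩ {ω | A ω = true}) :=
      pr_congr P (fun ω _ => by constructor <;> exact fun ⟨h1, h2⟩ => ⟨h2, h1⟩)
    rw [hqp', hc, ← hpp] at hsplit
    linarith
  have hDA0 : pr P ({ω | A ω = false} ∩ {ω | D ω = true}) = pD - qp * pD := by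
    have h2 := pr_compl_split P {ω | A ω = true} {ω | D ω = true}
    have hc : pr P ({ω | A ω = true}ᶜ ∩ {ω | D ω = true})
        = pr P ({ω | A ω = false} ∩ {ω | D ω = true}) :=
      pr_congr P (fun ω _ => by
        simp only [Set.mem_inter_iff, Set.mem_compl_iff, Set.mem_setOf_eq,
          Bool.not_eq_true])
    rw [hqp', hc, ← hpD] at h2
    linarith
  have he0 : pr P ({ω | D ω = false} ∩ {ω | A ω = false}) = (1 - pp) - (pD - qp * pD) := by
    have hsplit := pr_split P {ω | A ω = false} D
    have hc : pr P ({ω | A ω = false} ∩ {ω | D ω = false})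
        = pr P ({ω | D ω = false} ∩ {ω | A ω = false}) :=
      pr_congr P (fun ω _ => by constructor <;> exact fun ⟨h1, h2⟩ => ⟨h2, h1⟩)
    rw [hDA0, hc, ha0] at hsplit
    linarith
  -- Y-slice on A = false, D = true
  have hqym : pr P ({ω | Y ω = yh} ∩ {ω | A ω = false} ∩ {ω | D ω = true})
      = qy * pD - qyp * pD := by
    have h2 := pr_compl_split P {ω | A ω = true} ({ω | Y ω = yh} ∩ {ω | D ω = true})
    have hc1 : pr P ({ω | A ω = true} ∩ ({ω | Y ω = yh} ∩ {ω | D ω = true}))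
        = pr P ({ω | Y ω = yh} ∩ {ω | A ω = true} ∩ {ω | D ω = true}) :=
      pr_congr P (fun ω _ => by
        simp only [Set.mem_inter_iff, Set.mem_setOf_eq]; tauto)
    have hc2 : pr P ({ω | A ω = true}ᶜ ∩ ({ω | Y ω = yh} ∩ {ω | D ω = true}))
        = pr P ({ω | Y ω = yh} ∩ {ω | A ω = false} ∩ {ω | D ω = true}) :=
      pr_congr P (fun ω _ => by
        simp only [Set.mem_inter_iff, Set.mem_compl_iff, Set.mem_setOf_eq,
          Bool.not_eq_true]
        tauto)
    rw [hc1, hc2, hqy', hqyp'] at h2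
    linarith
  -- numerators
  have hn1 : pr P ({ω | Yh ω = yh} ∩ {ω | A ω = true})
      = qyp * pD + phip * (pp - qp * pD) := by
    have hsplit := pr_split P ({ω | Yh ω = yh} ∩ {ω | A ω = true}) D
    have hc1 : pr P ({ω | Yh ω = yh} ∩ {ω | A ω = true} ∩ {ω | D ω = true})
        = pr P ({ω | Y ω = yh} ∩ {ω | A ω = true} ∩ {ω | D ω = true}) := by
      apply pr_congr P
      intro ω hp
      simp only [Set.mem_inter_iff, Set.mem_setOf_eq]
      constructor
      · rintro ⟨⟨h1, h2⟩, h3⟩; exact ⟨⟨(has ω hp h3) ▸ h1, h2⟩, h3⟩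
      · rintro ⟨⟨h1, h2⟩, h3⟩; exact ⟨⟨(has ω hp h3).symm ▸ h1, h2⟩, h3⟩
    have hc2 : pr P ({ω | Yh ω = yh} ∩ {ω | A ω = true} ∩ {ω | D ω = false})
        = pr P ({ω | Yh ω = yh} ∩ ({ω | D ω = false} ∩ {ω | A ω = true})) :=
      pr_congr P (fun ω _ => by
        simp only [Set.mem_inter_iff, Set.mem_setOf_eq]; tauto)
    rw [hc1, hc2, hqyp', hphip', he1] at hsplit
    linarith
  have hn0 : pr P ({ω | Yh ω = yh} ∩ {ω | A ω = false})
      = (qy * pD - qyp * pD) + phim * ((1 - pp) - (pD - qp * pD)) := by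
    have hsplit := pr_split P ({ω | Yh ω = yh} ∩ {ω | A ω = false}) D
    have hc1 : pr P ({ω | Yh ω = yh} ∩ {ω | A ω = false} ∩ {ω | D ω = true})
        = pr P ({ω | Y ω = yh} ∩ {ω | A ω = false} ∩ {ω | D ω = true}) := by
      apply pr_congr P
      intro ω hp
      simp only [Set.mem_inter_iff, Set.mem_setOf_eq]
      constructor
      · rintro ⟨⟨h1, h2⟩, h3⟩; exact ⟨⟨(has ω hp h3) ▸ h1, h2⟩, h3⟩
      · rintro ⟨⟨h1, h2⟩, h3⟩; exact ⟨⟨(has ω hp h3).symm ▸ h1, h2⟩, h3⟩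
    have hc2 : pr P ({ω | Yh ω = yh} ∩ {ω | A ω = false} ∩ {ω | D ω = false})
        = pr P ({ω | Yh ω = yh} ∩ ({ω | D ω = false} ∩ {ω | A ω = false})) :=
      pr_congr P (fun ω _ => by
        simp only [Set.mem_inter_iff, Set.mem_setOf_eq]; tauto)
    rw [hc1, hc2, hqym, hphim', he0] at hsplit
    linarith
  -- final algebra
  unfold cpr
  rw [hn1, hn0, ← hpp, ha0]
  have h1 : pp ≠ 0 := ne_of_gt hpp0
  have h2 : (1 : ℝ) - pp ≠ 0 := by linarith
  field_simp
  ring
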